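/- Let φ denote the standard normal density on ℝ and let γ be the standard Gaussian measure on ℝ. Let (μ_n) and (σ_n) be real sequences with σ_n > 0, √n·μ_n → γ₁ and √n·(σ_n − 1) → γ₂ for real constants γ₁, γ₂. Then the functions x ↦ √n · ( φ((x − μ_n)/σ_n)/(σ_n · φ(x)) − 1 ) converge in L²(γ) to the function x ↦ γ₂(x² − 1) + γ₁ x. -/

import Mathlib

open MeasureTheory ProbabilityTheory Filter Real
open scoped ENNReal NNReal
set_option maxHeartbeats 1000000

/-- The standard normal density `φ(x) = (2π)^{-1/2} e^{-x²/2}`. -/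
noncomputable def stdNormalPDF (x : ℝ) : ℝ :=
  (Real.sqrt (2 * π))⁻¹ * Real.exp (-x ^ 2 / 2)

lemma aux_abs_exp_sub_one_le (t : ℝ) : |Real.exp t - 1| ≤ |t| * Real.exp |t| := by
  rcases le_or_gt 0 t with h | h
  · have h1 : (0:ℝ) ≤ Real.exp t - 1 := by have := Real.one_le_exp h; linarith
    rw [abs_of_nonneg h1, abs_of_nonneg h]
    have h2 : 1 - t ≤ Real.exp (-t) := by have := Real.add_one_le_exp (-t); linarith
    have h4 : Real.exp (-t) * Real.exp t = 1 := by rw [← Real.exp_add]; simp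
    nlinarith [mul_nonneg (sub_nonneg.2 h2) (Real.exp_pos t).le]
  · have h1 : Real.exp t - 1 ≤ 0 := by
      have : Real.exp t ≤ 1 := Real.exp_le_one_iff.mpr h.le
      linarith
    rw [abs_of_nonpos h1, abs_of_neg h]
    have h2 : t + 1 ≤ Real.exp t := Real.add_one_le_exp t
    have h3 : 1 ≤ Real.exp (-t) := Real.one_le_exp (by linarith)
    nlinarith

-- |x| ≤ (x²+1)/2
lemma aux_abs_le (x : ℝ) : |x| ≤ (x^2+1)/2 := by
  nlinarith [sq_nonneg (|x| - 1), sq_abs x, abs_nonneg x]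

lemma aux_sbH_bound (x H sb aa bb s m A B : ℝ)
    (hA1 : 1 ≤ A) (hB1 : 1 ≤ B) (hsb : 0 ≤ sb)
    (ha : |aa| ≤ A) (hb : |bb| ≤ B) (hs1 : 1/2 ≤ s) (hs2 : s ≤ 2) (hm : |m| ≤ 1)
    (hid : sb * H = (x^2*(bb*(s+1)) + 2*x*aa - aa*m)/(2*s^2)) :
    sb * |H| ≤ 6*(A+B)*(x^2+1) := by
  have hnum : |x^2*(bb*(s+1)) + 2*x*aa - aa*m| ≤ 3*B*x^2 + 2*A*|x| + A := by
    have t1 : |x^2*(bb*(s+1))| ≤ 3*B*x^2 := by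
      rw [abs_mul, abs_mul]
      have h1 : |x^2| = x^2 := abs_of_nonneg (sq_nonneg x)
      have h2 : |s+1| ≤ 3 := by rw [abs_of_nonneg (by linarith)]; linarith
      rw [h1]
      have h3 : |bb| * |s+1| ≤ 3*B := by nlinarith [abs_nonneg bb, abs_nonneg (s+1)]
      nlinarith [sq_nonneg x, mul_le_mul_of_nonneg_left h3 (sq_nonneg x)]
    have t2 : |2*x*aa| ≤ 2*A*|x| := by
      rw [abs_mul, abs_mul]
      have : |(2:ℝ)| = 2 := by norm_num
      rw [this]
      nlinarith [abs_nonneg x, abs_nonneg aa]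
    have t3 : |aa*m| ≤ A := by
      rw [abs_mul]
      nlinarith [abs_nonneg aa, abs_nonneg m]
    calc |x^2*(bb*(s+1)) + 2*x*aa - aa*m|
        ≤ |x^2*(bb*(s+1)) + 2*x*aa| + |aa*m| := abs_sub _ _
      _ ≤ |x^2*(bb*(s+1))| + |2*x*aa| + |aa*m| := by
          have := abs_add_le (x^2*(bb*(s+1))) (2*x*aa); linarith
      _ ≤ 3*B*x^2 + 2*A*|x| + A := by linarith
  have hden : (1:ℝ)/2 ≤ 2*s^2 := by nlinarith
  have h0 : sb * |H| = |x^2*(bb*(s+1)) + 2*x*aa - aa*m| / (2*s^2) := by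
    rw [← abs_of_nonneg hsb, ← abs_mul, hid, abs_div, abs_of_nonneg (by nlinarith : (0:ℝ) ≤ 2*s^2)]
  rw [h0]
  have h1 : |x^2*(bb*(s+1)) + 2*x*aa - aa*m| / (2*s^2) ≤ 2 * |x^2*(bb*(s+1)) + 2*x*aa - aa*m| := by
    rw [div_le_iff₀ (by nlinarith : (0:ℝ) < 2*s^2)]
    nlinarith [abs_nonneg (x^2*(bb*(s+1)) + 2*x*aa - aa*m)]
  have hx := aux_abs_le x
  nlinarith [abs_nonneg x]

lemma aux_H_small (x H sb A B : ℝ) (hA1 : 1 ≤ A) (hB1 : 1 ≤ B)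
    (hQ : 8*(6*(A+B)) ≤ sb) (h1 : sb * |H| ≤ 6*(A+B)*(x^2+1)) :
    |H| ≤ (x^2+1)/8 := by
  have hC : (0:ℝ) < 6*(A+B) := by linarith
  have h2 : 8*(6*(A+B)) * |H| ≤ 6*(A+B)*(x^2+1) :=
    le_trans (mul_le_mul_of_nonneg_right hQ (abs_nonneg H)) h1
  nlinarith [abs_nonneg H]

lemma aux_final_bound (x H sb bb s A B g1 g2 E : ℝ)
    (hA1 : 1 ≤ A) (hB1 : 1 ≤ B) (hsb : 0 ≤ sb)
    (hb : |bb| ≤ B) (hs1 : 1/2 ≤ s) (hs2 : s ≤ 2)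
    (hg1 : |g1| ≤ A) (hg2 : |g2| ≤ B)
    (hE1 : 1 ≤ E) (hexpE : Real.exp |H| ≤ E)
    (h1 : sb * |H| ≤ 6*(A+B)*(x^2+1)) :
    |(sb * (Real.exp H - 1) - bb) / s - (g2 * (x ^ 2 - 1) + g1 * x)| ≤
      (12*(A+B) + 2*B + A + B) * (x^2+1) * E := by
  have hP1 : (1:ℝ) ≤ x^2+1 := by nlinarith [sq_nonneg x]
  have habsE : |Real.exp H - 1| ≤ |H| * E := by
    calc |Real.exp H - 1| ≤ |H| * Real.exp |H| := aux_abs_exp_sub_one_le H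
      _ ≤ |H| * E := mul_le_mul_of_nonneg_left hexpE (abs_nonneg H)
  have h3 : sb * |Real.exp H - 1| ≤ 6*(A+B)*(x^2+1) * E := by
    calc sb * |Real.exp H - 1| ≤ sb * (|H| * E) :=
          mul_le_mul_of_nonneg_left habsE hsb
      _ = (sb * |H|) * E := by ring
      _ ≤ (6*(A+B)*(x^2+1)) * E := mul_le_mul_of_nonneg_right h1 (by linarith)
  have h4 : |sb * (Real.exp H - 1) - bb| ≤ 6*(A+B)*(x^2+1)*E + B := by
    calc |sb * (Real.exp H - 1) - bb| ≤ |sb * (Real.exp H - 1)| + |bb| := abs_sub _ _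
      _ ≤ 6*(A+B)*(x^2+1)*E + B := by
          rw [abs_mul, abs_of_nonneg hsb]; linarith
  have h5 : |(sb * (Real.exp H - 1) - bb) / s| ≤ 2*(6*(A+B)*(x^2+1)*E + B) := by
    rw [abs_div, abs_of_nonneg (by linarith : (0:ℝ) ≤ s), div_le_iff₀ (by linarith : (0:ℝ) < s)]
    nlinarith [abs_nonneg (sb * (Real.exp H - 1) - bb)]
  have h6 : |g2 * (x ^ 2 - 1) + g1 * x| ≤ B*(x^2+1) + A*(x^2+1) := by
    have t1 : |g2 * (x^2-1)| ≤ B*(x^2+1) := by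
      rw [abs_mul]
      have : |x^2-1| ≤ x^2+1 := by
        rw [abs_le]; constructor <;> nlinarith [sq_nonneg x]
      nlinarith [abs_nonneg g2, abs_nonneg (x^2-1)]
    have t2 : |g1 * x| ≤ A*(x^2+1) := by
      rw [abs_mul]
      have hx : |x| ≤ x^2+1 := by nlinarith [aux_abs_le x]
      nlinarith [abs_nonneg g1, abs_nonneg x]
    calc |g2 * (x ^ 2 - 1) + g1 * x| ≤ |g2 * (x^2-1)| + |g1 * x| := abs_add_le _ _
      _ ≤ B*(x^2+1) + A*(x^2+1) := by linarith
  calc |(sb * (Real.exp H - 1) - bb) / s - (g2 * (x ^ 2 - 1) + g1 * x)|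
      ≤ |(sb * (Real.exp H - 1) - bb) / s| + |g2 * (x ^ 2 - 1) + g1 * x| := abs_sub _ _
    _ ≤ 2*(6*(A+B)*(x^2+1)*E + B) + (B*(x^2+1) + A*(x^2+1)) := by linarith
    _ ≤ (12*(A+B) + 2*B + A + B) * (x^2+1) * E := by
        have k1 : (1:ℝ) ≤ (x^2+1)*E := by nlinarith
        have k2 : (x^2+1) ≤ (x^2+1)*E := by nlinarith
        have m1 := mul_le_mul_of_nonneg_left k1 (by linarith : (0:ℝ) ≤ B)
        have m2 := mul_le_mul_of_nonneg_left k2 (by linarith : (0:ℝ) ≤ A)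
        have m3 := mul_le_mul_of_nonneg_left k2 (by linarith : (0:ℝ) ≤ B)
        nlinarith [m1, m2, m3]

lemma stdNormalPDF_pos (x : ℝ) : 0 < stdNormalPDF x := by
  unfold stdNormalPDF
  have : (0:ℝ) < 2 * π := by positivity
  positivity

lemma stdNormalPDF_continuous : Continuous stdNormalPDF := by
  unfold stdNormalPDF; fun_prop

-- ratio identity
lemma ratio_eq (s m x : ℝ) (hs : s ≠ 0) :
    stdNormalPDF ((x - m) / s) / (s * stdNormalPDF x)
      = Real.exp ((x ^ 2 - ((x - m) / s) ^ 2) / 2) / s := by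
  unfold stdNormalPDF
  have hc : Real.sqrt (2 * π) ≠ 0 := by
    have : (0:ℝ) < 2 * π := by positivity
    positivity
  have he : Real.exp ((x ^ 2 - ((x - m) / s) ^ 2) / 2)
      = Real.exp (-((x - m) / s) ^ 2 / 2) / Real.exp (-x ^ 2 / 2) := by
    rw [← Real.exp_sub]; congr 1; ring
  rw [he]
  have h1 : Real.exp (-x^2/2) ≠ 0 := (Real.exp_pos _).ne'
  field_simp

/-- if `√n μ_n → γ₁` and `√n (σ_n - 1) → γ₂`, then
`x ↦ √n (φ((x-μ_n)/σ_n)/(σ_n φ(x)) - 1)` converges in `L²(γ)` (γ the standard Gaussian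
measure) to `x ↦ γ₂(x² - 1) + γ₁ x`. -/
theorem normal_score_L2_limit
    (μ σ : ℕ → ℝ) (hσ : ∀ n, 0 < σ n) (γ₁ γ₂ : ℝ)
    (hμ : Tendsto (fun n : ℕ => Real.sqrt n * μ n) atTop (nhds γ₁))
    (hσ' : Tendsto (fun n : ℕ => Real.sqrt n * (σ n - 1)) atTop (nhds γ₂)) :
    Tendsto
      (fun n : ℕ =>
        eLpNorm
          (fun x =>
            Real.sqrt n * (stdNormalPDF ((x - μ n) / σ n) / (σ n * stdNormalPDF x) - 1) -
              (γ₂ * (x ^ 2 - 1) + γ₁ * x))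
          2 (gaussianReal 0 1))
      atTop (nhds 0) := by
  have hσ0 : ∀ n, σ n ≠ 0 := fun n => (hσ n).ne'
  -- abbreviations
  set G : ℕ → ℝ → ℝ := fun n x =>
      Real.sqrt n * (stdNormalPDF ((x - μ n) / σ n) / (σ n * stdNormalPDF x) - 1) -
        (γ₂ * (x ^ 2 - 1) + γ₁ * x) with hG_def
  set h : ℕ → ℝ → ℝ := fun n x => (x ^ 2 - ((x - μ n) / σ n) ^ 2) / 2 with hh_def
  -- key rewriting of G
  have key : ∀ (n : ℕ) (x : ℝ), G n x =
      (Real.sqrt n * (Real.exp (h n x) - 1) - Real.sqrt n * (σ n - 1)) / σ n -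
        (γ₂ * (x ^ 2 - 1) + γ₁ * x) := by
    intro n x
    simp only [hG_def, hh_def]
    rw [ratio_eq _ _ _ (hσ0 n)]
    field_simp [hσ0 n]
    ring
  -- sqrt tends to infinity
  have hqtop : Tendsto (fun n : ℕ => Real.sqrt n) atTop atTop := by
    have h1 : Tendsto (fun x : ℝ => x ^ (1/2 : ℝ)) atTop atTop :=
      tendsto_rpow_atTop (by norm_num)
    have h2 := h1.comp tendsto_natCast_atTop_atTop (α := ℕ)
    refine h2.congr fun n => ?_
    simp [Function.comp, Real.sqrt_eq_rpow]
  have hqinv : Tendsto (fun n : ℕ => (Real.sqrt n)⁻¹) atTop (nhds 0) :=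
    hqtop.inv_tendsto_atTop
  -- μ → 0, σ → 1
  have hμ0 : Tendsto μ atTop (nhds 0) := by
    have h1 := hμ.mul hqinv
    rw [mul_zero] at h1
    refine h1.congr' ?_
    filter_upwards [eventually_ge_atTop 1] with n hn
    have hs : Real.sqrt n ≠ 0 := by
      have : (0:ℝ) < n := by exact_mod_cast hn
      positivity
    field_simp
  have hσ1 : Tendsto σ atTop (nhds 1) := by
    have h1 := (tendsto_const_nhds (x := (1:ℝ)) (f := atTop)).add (hσ'.mul hqinv)
    rw [mul_zero, add_zero] at h1
    refine h1.congr' ?_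
    filter_upwards [eventually_ge_atTop 1] with n hn
    have hs : Real.sqrt n ≠ 0 := by
      have : (0:ℝ) < n := by exact_mod_cast hn
      positivity
    field_simp
    ring
  -- identity for sqrt n * h n x
  have hid : ∀ (n : ℕ) (x : ℝ), Real.sqrt n * h n x =
      (x^2*((Real.sqrt n * (σ n - 1))*(σ n+1)) + 2*x*(Real.sqrt n * μ n)
        - (Real.sqrt n * μ n) * μ n)/(2*(σ n)^2) := by
    intro n x
    simp only [hh_def]
    field_simp [hσ0 n]
    ring
  -- pointwise: sqrt n * h n x → γ₂ x² + γ₁ x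
  have hT : ∀ x : ℝ, Tendsto (fun n : ℕ => Real.sqrt n * h n x) atTop (nhds (γ₂*x^2 + γ₁*x)) := by
    intro x
    have hnum : Tendsto (fun n : ℕ => x^2*((Real.sqrt n * (σ n - 1))*(σ n+1))
        + 2*x*(Real.sqrt n * μ n) - (Real.sqrt n * μ n) * μ n) atTop
        (nhds (x^2*(γ₂*(1+1)) + 2*x*γ₁ - γ₁*0)) := by
      exact ((tendsto_const_nhds.mul (hσ'.mul (hσ1.add tendsto_const_nhds))).add
        (tendsto_const_nhds.mul hμ)).sub (hμ.mul hμ0)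
    have hden : Tendsto (fun n : ℕ => 2*(σ n)^2) atTop (nhds (2*(1:ℝ)^2)) :=
      tendsto_const_nhds.mul (hσ1.pow 2)
    have h2 := hnum.div hden (by norm_num)
    have hval : (x^2*(γ₂*(1+1)) + 2*x*γ₁ - γ₁*0)/(2*(1:ℝ)^2) = γ₂*x^2 + γ₁*x := by ring
    rw [hval] at h2
    exact Tendsto.congr (fun n => (hid n x).symm) h2
  -- h n x → 0
  have hh0 : ∀ x : ℝ, Tendsto (fun n : ℕ => h n x) atTop (nhds 0) := by
    intro x
    have h1 := (hT x).mul hqinv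
    rw [mul_zero] at h1
    refine h1.congr' ?_
    filter_upwards [eventually_ge_atTop 1] with n hn
    have hs : Real.sqrt n ≠ 0 := by
      have : (0:ℝ) < n := by exact_mod_cast hn
      positivity
    field_simp
  -- sqrt n * (exp h - 1 - h) → 0
  have hE : ∀ x : ℝ, Tendsto (fun n : ℕ => Real.sqrt n * (Real.exp (h n x) - 1 - h n x))
      atTop (nhds 0) := by
    intro x
    have h0' : Tendsto (fun n : ℕ => |h n x|) atTop (nhds 0) := by
      simpa using (hh0 x).abs
    have hb : Tendsto (fun n : ℕ => |Real.sqrt n * h n x| * |h n x|) atTop (nhds 0) := by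
      have := ((hT x).abs).mul h0'
      simpa using this
    refine squeeze_zero_norm' ?_ hb
    filter_upwards [h0'.eventually (gt_mem_nhds one_pos)] with n hn
    have hsb : (0:ℝ) ≤ Real.sqrt n := Real.sqrt_nonneg _
    calc ‖Real.sqrt n * (Real.exp (h n x) - 1 - h n x)‖
        = Real.sqrt n * |Real.exp (h n x) - 1 - h n x| := by
          rw [Real.norm_eq_abs, abs_mul, abs_of_nonneg hsb]
      _ ≤ Real.sqrt n * (h n x)^2 := by
          gcongr
          exact Real.abs_exp_sub_one_sub_id_le hn.le
      _ = |Real.sqrt n * h n x| * |h n x| := by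
          rw [abs_mul, abs_of_nonneg hsb, ← sq_abs]; ring
  -- pointwise convergence of G
  have hpt : ∀ x : ℝ, Tendsto (fun n : ℕ => G n x) atTop (nhds 0) := by
    intro x
    have h1 : Tendsto (fun n : ℕ => Real.sqrt n * (Real.exp (h n x) - 1)) atTop
        (nhds (γ₂*x^2 + γ₁*x)) := by
      have := (hE x).add (hT x)
      rw [zero_add] at this
      exact this.congr fun n => by ring
    have h2 := ((h1.sub hσ').div hσ1 one_ne_zero).sub_const (γ₂ * (x ^ 2 - 1) + γ₁ * x)
    have hval : (γ₂*x^2 + γ₁*x - γ₂)/1 - (γ₂ * (x ^ 2 - 1) + γ₁ * x) = 0 := by ring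
    rw [hval] at h2
    exact Tendsto.congr (fun n => (key n x).symm) h2
  -- constants
  set A : ℝ := |γ₁| + 1 with hA_def
  set B : ℝ := |γ₂| + 1 with hB_def
  have hA1 : 1 ≤ A := by simp [hA_def]
  have hB1 : 1 ≤ B := by simp [hB_def]
  set K : ℝ := 12*(A+B) + 2*B + A + B with hK_def
  set g : ℝ → ℝ := fun x => K*(x^2+1)*Real.exp ((x^2+1)/8) with hg_def
  have hK0 : 0 < K := by rw [hK_def]; linarith
  have hg0 : ∀ x, 0 ≤ g x := by
    intro x
    simp only [hg_def]
    positivity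
  -- eventual hypotheses
  have hevA : ∀ᶠ n : ℕ in atTop, |Real.sqrt n * μ n| ≤ A := by
    filter_upwards [hμ.abs.eventually (gt_mem_nhds (by simp [hA_def] : |γ₁| < A))] with n hn
    exact hn.le
  have hevB : ∀ᶠ n : ℕ in atTop, |Real.sqrt n * (σ n - 1)| ≤ B := by
    filter_upwards [hσ'.abs.eventually (gt_mem_nhds (by simp [hB_def] : |γ₂| < B))] with n hn
    exact hn.le
  have hevS : ∀ᶠ n in atTop, σ n ∈ Set.Icc (1/2 : ℝ) 2 :=
    hσ1.eventually (Icc_mem_nhds (by norm_num) (by norm_num))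
  have hevM : ∀ᶠ n in atTop, |μ n| ≤ 1 := by
    have : Tendsto (fun n => |μ n|) atTop (nhds 0) := by simpa using hμ0.abs
    filter_upwards [this.eventually (gt_mem_nhds one_pos)] with n hn
    exact hn.le
  have hevQ : ∀ᶠ n : ℕ in atTop, 8*(6*(A+B)) ≤ Real.sqrt n :=
    hqtop.eventually_ge_atTop _
  obtain ⟨N, hN⟩ := eventually_atTop.mp (hevA.and (hevB.and (hevS.and (hevM.and hevQ))))
  -- the real bound for n ≥ N
  have hbnd : ∀ n : ℕ, N ≤ n → ∀ x : ℝ, |G n x| ≤ g x := by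
    intro n hn x
    obtain ⟨h_a, h_b, h_s, h_m, h_q⟩ := hN n hn
    have hsb : (0:ℝ) ≤ Real.sqrt n := Real.sqrt_nonneg _
    have h1 : Real.sqrt n * |h n x| ≤ 6*(A+B)*(x^2+1) :=
      aux_sbH_bound x (h n x) (Real.sqrt n) (Real.sqrt n * μ n) (Real.sqrt n * (σ n - 1))
        (σ n) (μ n) A B hA1 hB1 hsb h_a h_b h_s.1 h_s.2 h_m (hid n x)
    have h2 : |h n x| ≤ (x^2+1)/8 :=
      aux_H_small x (h n x) (Real.sqrt n) A B hA1 hB1 h_q h1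
    have hg1 : |γ₁| ≤ A := by simp [hA_def]
    have hg2 : |γ₂| ≤ B := by simp [hB_def]
    rw [key n x]
    simp only [hg_def, hK_def]
    exact aux_final_bound x (h n x) (Real.sqrt n) (Real.sqrt n * (σ n - 1)) (σ n) A B γ₁ γ₂
      (Real.exp ((x^2+1)/8)) hA1 hB1 hsb h_b h_s.1 h_s.2 hg1 hg2
      (Real.one_le_exp (by positivity)) (Real.exp_le_exp.mpr h2) h1
  -- continuity / measurability of G n
  have hGc : ∀ n, Continuous (G n) := by
    intro n
    have hden : ∀ x : ℝ, σ n * stdNormalPDF x ≠ 0 := fun x =>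
      (mul_pos (hσ n) (stdNormalPDF_pos x)).ne'
    have hc1 : Continuous fun x : ℝ => stdNormalPDF ((x - μ n) / σ n) :=
      stdNormalPDF_continuous.comp (by fun_prop)
    have hc2 : Continuous fun x : ℝ => σ n * stdNormalPDF x :=
      continuous_const.mul stdNormalPDF_continuous
    have hc3 := hc1.div hc2 hden
    simp only [hG_def]
    exact (continuous_const.mul (hc3.sub continuous_const)).sub (by fun_prop)
  -- integrability of g² wrt gaussian
  have hIg : Integrable (fun x => (g x)^2) (gaussianReal 0 1) := by
    rw [gaussianReal_of_var_ne_zero _ one_ne_zero,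
      integrable_withDensity_iff (measurable_gaussianPDF _ _)
        (ae_of_all _ fun x => ENNReal.ofReal_lt_top)]
    have heq : (fun x => (g x)^2 * (gaussianPDF 0 1 x).toReal)
        = fun x => (K^2 * (Real.sqrt (2*π*(1:ℝ≥0)))⁻¹ * Real.exp (1/4)) *
            ((x^2+1)^2 * Real.exp (-(1/4) * x^2)) := by
      funext x
      rw [gaussianPDF, ENNReal.toReal_ofReal (gaussianPDFReal_nonneg _ _ _)]
      simp only [hg_def, gaussianPDFReal]
      have e1 : Real.exp ((x^2+1)/8) ^ 2 * Real.exp (-(x-0)^2/(2*(1:ℝ≥0))) =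
          Real.exp (1/4) * Real.exp (-(1/4)*x^2) := by
        rw [sq, ← Real.exp_add, ← Real.exp_add, ← Real.exp_add]
        norm_num
        ring_nf
      push_cast at e1 ⊢
      linear_combination (K^2 * (Real.sqrt (2*π*1))⁻¹ * (x^2+1)^2) * e1
    rw [heq]
    apply Integrable.const_mul
    have h4 : Integrable (fun x : ℝ => x^(4:ℕ) * Real.exp (-(1/4) * x^2)) volume := by
      have := integrable_rpow_mul_exp_neg_mul_sq (by norm_num : (0:ℝ) < 1/4)
        (s := (4:ℝ)) (by norm_num)
      refine this.congr (Eventually.of_forall fun x => ?_)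
      show x ^ (4:ℝ) * rexp (-(1/4) * x^2) = x ^ (4:ℕ) * rexp (-(1/4) * x^2)
      rw [← Real.rpow_natCast x 4]; norm_num
    have h2 : Integrable (fun x : ℝ => x^(2:ℕ) * Real.exp (-(1/4) * x^2)) volume := by
      have := integrable_rpow_mul_exp_neg_mul_sq (by norm_num : (0:ℝ) < 1/4)
        (s := (2:ℝ)) (by norm_num)
      refine this.congr (Eventually.of_forall fun x => ?_)
      show x ^ (2:ℝ) * rexp (-(1/4) * x^2) = x ^ (2:ℕ) * rexp (-(1/4) * x^2)
      rw [← Real.rpow_natCast x 2]; norm_num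
    have h0 : Integrable (fun x : ℝ => Real.exp (-(1/4) * x^2)) volume :=
      integrable_exp_neg_mul_sq (by norm_num)
    have hsum := (h4.add (h2.const_mul 2)).add h0
    exact hsum.congr (Eventually.of_forall fun x => by simp only [Pi.add_apply]; ring)
  -- reduce to shifted sequence and eLpNorm → lintegral
  show Tendsto (fun n : ℕ => eLpNorm (G n) 2 (gaussianReal 0 1)) atTop (nhds 0)
  rw [← tendsto_add_atTop_iff_nat N]
  have hrw : ∀ n : ℕ, eLpNorm (G n) 2 (gaussianReal 0 1)
      = (∫⁻ x, (‖G n x‖₊ : ℝ≥0∞) ^ (2:ℕ) ∂(gaussianReal 0 1)) ^ (1/2 : ℝ) := by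
    intro n
    rw [eLpNorm_eq_lintegral_rpow_enorm_toReal (by norm_num) (by norm_num)]
    simp only [enorm_eq_nnnorm]
    norm_num
  have hI : Tendsto (fun m : ℕ => ∫⁻ x, (‖G (m + N) x‖₊ : ℝ≥0∞) ^ (2:ℕ) ∂(gaussianReal 0 1))
      atTop (nhds 0) := by
    have h0 : (0:ℝ≥0∞) = ∫⁻ _x, (0:ℝ≥0∞) ∂(gaussianReal 0 1) := by simp
    rw [h0]
    refine tendsto_lintegral_of_dominated_convergence
      (fun x => (ENNReal.ofReal (g x)) ^ (2:ℕ)) (fun m => ?_) (fun m => ?_) ?_ ?_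
    · exact (hGc (m+N)).measurable.enorm.pow_const 2
    · refine ae_of_all _ fun x => ?_
      have hb := hbnd (m+N) (Nat.le_add_left N m) x
      have hx : (‖G (m+N) x‖₊ : ℝ≥0∞) ≤ ENNReal.ofReal (g x) := by
        rw [← enorm_eq_nnnorm, ← ofReal_norm]
        exact ENNReal.ofReal_le_ofReal (by rwa [Real.norm_eq_abs])
      show (‖G (m+N) x‖₊ : ℝ≥0∞)^(2:ℕ) ≤ ENNReal.ofReal (g x) ^ (2:ℕ)
      rw [pow_two, pow_two]
      exact mul_le_mul' hx hx
    · have heq2 : ∀ x, (ENNReal.ofReal (g x)) ^ (2:ℕ) = ENNReal.ofReal ((g x)^2) := fun x =>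
        (ENNReal.ofReal_pow (hg0 x) 2).symm
      rw [lintegral_congr heq2]
      exact hIg.lintegral_lt_top.ne
    · refine ae_of_all _ fun x => ?_
      have h1 : Tendsto (fun m : ℕ => G (m + N) x) atTop (nhds 0) :=
        (tendsto_add_atTop_iff_nat N).mpr (hpt x)
      have h2 : Tendsto (fun m : ℕ => (‖G (m + N) x‖₊ : ℝ≥0∞)) atTop (nhds 0) := by
        rw [← ENNReal.coe_zero]
        exact ENNReal.tendsto_coe.mpr (by simpa using h1.nnnorm)
      have h3 := ((ENNReal.continuous_pow 2).tendsto 0).comp h2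
      simpa [Function.comp_def] using h3
  simp only [hrw]
  rw [ENNReal.tendsto_nhds_zero]
  intro ε hε
  have hε2 : (0:ℝ≥0∞) < ε ^ (2:ℕ) := ENNReal.pow_pos hε 2
  filter_upwards [ENNReal.tendsto_nhds_zero.mp hI _ hε2] with m hm
  calc (∫⁻ x, (‖G (m + N) x‖₊ : ℝ≥0∞) ^ (2:ℕ) ∂(gaussianReal 0 1)) ^ (1/2 : ℝ)
      ≤ (ε ^ (2:ℕ)) ^ (1/2 : ℝ) := ENNReal.rpow_le_rpow hm (by norm_num)
    _ = ε := by
        rw [← ENNReal.rpow_natCast, ← ENNReal.rpow_mul]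
        norm_num
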